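/- Let R = k[x,y,z]/(x²-y², y²-z²) over a field k with char k ≠ 2, and let t = (t₀,t₁) ∈ k² \ {0}. If A, B are scalar 2×2 matrices over k such that B · Φ_t⁺ = Φ_t⁺ · A as matrices over R (where Φ_t⁺ = [[t₁(x+y), y+z],[t₀(z-y), x-y]]), then A = B = c·I₂ for some c ∈ k. -/

import Mathlib

open MvPolynomial

noncomputable section

variable (k : Type) [Field k]

/-- The ideal `(x² - y², y² - z²)` of `S = k[x,y,z]`. -/
def fourPtsIdeal : Ideal (MvPolynomial (Fin 3) k) :=
  Ideal.span {(X 0 : MvPolynomial (Fin 3) k) ^ 2 - X 1 ^ 2,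
              (X 1 : MvPolynomial (Fin 3) k) ^ 2 - X 2 ^ 2}

/-- `R = k[x,y,z]/(x² - y², y² - z²)`. -/
def Rring := MvPolynomial (Fin 3) k ⧸ fourPtsIdeal k

instance : CommRing (Rring k) := Ideal.Quotient.commRing _
instance : Algebra k (Rring k) := Ideal.Quotient.algebra k

/-- `Φ_t⁺ = [[t₁(x+y), y+z], [t₀(z-y), x-y]]` as a matrix over `R`. -/
def PhiPlusR (t₀ t₁ : k) : Matrix (Fin 2) (Fin 2) (Rring k) :=
  (!![C t₁ * (X 0 + X 1), X 1 + X 2;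
      C t₀ * (X 2 - X 1), X 0 - X 1]).map (Ideal.Quotient.mk (fourPtsIdeal k))

/-- Evaluation of `R` at a point `(1, e, d)` with `e² = 1`, `d² = 1`. -/
def evR (e d : k) (he : e ^ 2 = 1) (hd : d ^ 2 = 1) : Rring k →+* k :=
  Ideal.Quotient.lift (fourPtsIdeal k)
    ((aeval ![1, e, d] : MvPolynomial (Fin 3) k →ₐ[k] k) : MvPolynomial (Fin 3) k →+* k)
    (by
      intro a ha
      rw [fourPtsIdeal, Ideal.mem_span_pair] at ha
      obtain ⟨u, v, rfl⟩ := ha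
      simp [he, hd])

lemma evR_mk (e d : k) (he : e ^ 2 = 1) (hd : d ^ 2 = 1) (p : MvPolynomial (Fin 3) k) :
    evR k e d he hd (Ideal.Quotient.mk (fourPtsIdeal k) p) = aeval ![1, e, d] p :=
  Ideal.Quotient.lift_mk _ _ _

lemma evR_algebraMap (e d : k) (he : e ^ 2 = 1) (hd : d ^ 2 = 1) (r : k) :
    evR k e d he hd (algebraMap k (Rring k) r) = r := by
  have : algebraMap k (Rring k) r = Ideal.Quotient.mk (fourPtsIdeal k) (C r) := rfl
  rw [this, evR_mk]
  simp

/-- for `char k ≠ 2` and `t = (t₀,t₁) ≠ 0`, if scalar `2×2` matrices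
`A, B` over `k` satisfy `B · Φ_t⁺ = Φ_t⁺ · A` over `R`, then `A = B = c·I₂` for some
`c ∈ k`.  (Hence `End_{gr R}(N_t) = k` and `N_t = coker Φ_t⁺` is indecomposable.) -/
theorem stmt_4 (hchar : (2 : k) ≠ 0) (t₀ t₁ : k) (ht : ¬(t₀ = 0 ∧ t₁ = 0))
    (A B : Matrix (Fin 2) (Fin 2) k)
    (h : (B.map (algebraMap k (Rring k))) * PhiPlusR k t₀ t₁ =
         PhiPlusR k t₀ t₁ * (A.map (algebraMap k (Rring k)))) :
    ∃ c : k, A = c • (1 : Matrix (Fin 2) (Fin 2) k) ∧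
             B = c • (1 : Matrix (Fin 2) (Fin 2) k) := by
  have key : ∀ (e d : k), e ^ 2 = 1 → d ^ 2 = 1 → ∀ i j : Fin 2,
      (B * !![t₁ * (1 + e), e + d; t₀ * (d - e), 1 - e]) i j =
      (!![t₁ * (1 + e), e + d; t₀ * (d - e), 1 - e] * A) i j := by
    intro e d he hd i j
    have h2 := congrArg (fun M : Matrix (Fin 2) (Fin 2) (Rring k) =>
      M.map (evR k e d he hd)) h
    rw [Matrix.map_mul (f := evR k e d he hd), Matrix.map_mul (f := evR k e d he hd)] at h2
    have hB : (B.map (algebraMap k (Rring k))).map (evR k e d he hd) = B := by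
      rw [Matrix.map_map]
      ext i j
      exact evR_algebraMap k e d he hd (B i j)
    have hA : (A.map (algebraMap k (Rring k))).map (evR k e d he hd) = A := by
      rw [Matrix.map_map]
      ext i j
      exact evR_algebraMap k e d he hd (A i j)
    have hPhi : (PhiPlusR k t₀ t₁).map (evR k e d he hd) =
        !![t₁ * (1 + e), e + d; t₀ * (d - e), 1 - e] := by
      rw [PhiPlusR]
      ext i j
      fin_cases i <;> fin_cases j <;>
        erw [Matrix.map_apply, evR_mk] <;> simp [evR_mk]
    rw [hB, hA, hPhi] at h2
    rw [h2]
  have h1 : (1 : k) ^ 2 = 1 := one_pow 2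
  have hm : (-1 : k) ^ 2 = 1 := by ring
  have E := fun i j => key 1 1 h1 h1 i j
  have F := fun i j => key 1 (-1) h1 hm i j
  have G := fun i j => key (-1) 1 hm h1 i j
  have H := fun i j => key (-1) (-1) hm hm i j
  simp only [Matrix.mul_apply, Fin.sum_univ_two] at E F G H
  have E00 := E 0 0; have E01 := E 0 1; have E10 := E 1 0; have E11 := E 1 1
  have F00 := F 0 0; have F01 := F 0 1; have F10 := F 1 0; have F11 := F 1 1
  have G00 := G 0 0; have G01 := G 0 1; have G10 := G 1 0; have G11 := G 1 1
  have H00 := H 0 0; have H01 := H 0 1; have H10 := H 1 0; have H11 := H 1 1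
  simp only [Matrix.of_apply, Matrix.cons_val', Matrix.cons_val_zero, Matrix.cons_val_one,
    Matrix.head_cons, Matrix.empty_val', Matrix.cons_val_fin_one,
    Matrix.head_fin_const] at E00 E01 E10 E11 F00 F01 F10 F11 G00 G01 G10 G11 H00 H01 H10 H11
  have ha10 : A 1 0 = 0 := by
    have h2 : (2 : k) * A 1 0 = 0 := by linear_combination H00
    exact (mul_eq_zero.1 h2).resolve_left hchar
  have hb10 : B 1 0 = 0 := by
    have h2 : (2 : k) * B 1 0 = 0 := by linear_combination E11
    exact (mul_eq_zero.1 h2).resolve_left hchar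
  have hb01 : B 0 1 = 0 := by
    have h2 : (2 : k) * B 0 1 = 0 := by linear_combination G01
    exact (mul_eq_zero.1 h2).resolve_left hchar
  have ha01t1 : t₁ * A 0 1 = 0 := by
    have h2 : (2 : k) * (t₁ * A 0 1) = 0 := by linear_combination -F01
    exact (mul_eq_zero.1 h2).resolve_left hchar
  have ha01t0 : t₀ * A 0 1 = 0 := by
    have h2 : (2 : k) * (t₀ * A 0 1) = 0 := by linear_combination F11
    exact (mul_eq_zero.1 h2).resolve_left hchar
  have ha01 : A 0 1 = 0 := by
    rcases eq_or_ne t₀ 0 with h0 | h0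
    · rcases eq_or_ne t₁ 0 with h1' | h1'
      · exact absurd ⟨h0, h1'⟩ ht
      · exact (mul_eq_zero.1 ha01t1).resolve_left h1'
    · exact (mul_eq_zero.1 ha01t0).resolve_left h0
  have hb00 : B 0 0 = A 1 1 := by
    have h2 : (2 : k) * (B 0 0 - A 1 1) = 0 := by linear_combination E01 + 2 * t₁ * ha01
    exact sub_eq_zero.1 ((mul_eq_zero.1 h2).resolve_left hchar)
  have hb11 : B 1 1 = A 1 1 := by
    have h2 : (2 : k) * (B 1 1 - A 1 1) = 0 := by linear_combination G11 + 2 * t₀ * ha01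
    exact sub_eq_zero.1 ((mul_eq_zero.1 h2).resolve_left hchar)
  have ha00 : A 0 0 = A 1 1 := by
    rcases eq_or_ne t₁ 0 with h1' | h1'
    · have h0 : t₀ ≠ 0 := fun h0 => ht ⟨h0, h1'⟩
      have h2 : 2 * t₀ * (A 0 0 - A 1 1) = 0 := by
        linear_combination -G10 + 2 * t₀ * hb11 - 2 * ha10
      exact sub_eq_zero.1 ((mul_eq_zero.1 h2).resolve_left (mul_ne_zero hchar h0))
    · have h2 : 2 * t₁ * (A 0 0 - A 1 1) = 0 := by
        linear_combination -E00 + 2 * t₁ * hb00 - 2 * ha10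
      exact sub_eq_zero.1 ((mul_eq_zero.1 h2).resolve_left (mul_ne_zero hchar h1'))
  refine ⟨A 1 1, ?_, ?_⟩
  · rw [Matrix.eta_fin_two A, ha00, ha01, ha10]
    ext i j
    fin_cases i <;> fin_cases j <;> simp [Matrix.one_apply]
  · rw [Matrix.eta_fin_two B, hb00, hb01, hb10, hb11]
    ext i j
    fin_cases i <;> fin_cases j <;> simp [Matrix.one_apply]

end
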